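/- Let K and h be non-negative integers with K ≥ 3h − 1. Then Σ_{i=0}^{h} C(K, i) ≤ 2·C(K, h); that is, the binary Hamming ball volume V_2(K,h) is at most twice the top binomial coefficient C(K,h). -/

import Mathlib

lemma step_lemma (K h : ℕ) (hKh : 3 * h - 1 ≤ K) (i : ℕ) (hi : i < h) :
    2 * K.choose i ≤ K.choose (i + 1) := by
  have h1 : K.choose (i + 1) * (i + 1) = K.choose i * (K - i) :=
    Nat.choose_succ_right_eq K i
  have hK : 2 * h ≤ K - i := by omega
  have h2 : K.choose i * (2 * (i + 1)) ≤ K.choose i * (K - i) :=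
    Nat.mul_le_mul_left _ (by omega)
  have h3 : (2 * K.choose i) * (i + 1) ≤ K.choose (i + 1) * (i + 1) := by
    rw [h1]; nlinarith [h2]
  exact Nat.le_of_mul_le_mul_right h3 (by omega)

lemma pow_mul_choose_le (K h : ℕ) (hKh : 3 * h - 1 ≤ K) :
    ∀ d i, i + d = h → 2 ^ d * K.choose i ≤ K.choose h := by
  intro d
  induction d with
  | zero => intro i hi; simpa using le_of_eq (by rw [← hi]; ring_nf)
  | succ d ih =>
    intro i hi
    have hlt : i < h := by omega
    calc 2 ^ (d + 1) * K.choose i = 2 ^ d * (2 * K.choose i) := by ring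
      _ ≤ 2 ^ d * K.choose (i + 1) :=
          Nat.mul_le_mul_left _ (step_lemma K h hKh i hlt)
      _ ≤ K.choose h := ih (i + 1) (by omega)

/-- For non-negative integers `K ≥ 3h - 1`, the binary Hamming ball volume
`V₂(K,h) = ∑_{i=0}^{h} C(K,i)` is at most `2·C(K,h)`. -/
theorem hamming_ball_le_two_mul_top_binom
    (K h : ℕ) (hKh : 3 * h - 1 ≤ K) :
    ∑ i ∈ Finset.range (h + 1), K.choose i ≤ 2 * K.choose h := by
  have key : 2 ^ h * ∑ i ∈ Finset.range (h + 1), K.choose i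
      ≤ 2 ^ h * (2 * K.choose h) := by
    rw [Finset.mul_sum]
    calc ∑ i ∈ Finset.range (h + 1), 2 ^ h * K.choose i
        ≤ ∑ i ∈ Finset.range (h + 1), 2 ^ i * K.choose h := by
          apply Finset.sum_le_sum
          intro i hi
          have hih : i ≤ h := by
            have := Finset.mem_range.mp hi; omega
          have : 2 ^ h * K.choose i = 2 ^ i * (2 ^ (h - i) * K.choose i) := by
            rw [← mul_assoc, ← pow_add]; congr 1; congr 1; omega
          rw [this]
          exact Nat.mul_le_mul_left _ (pow_mul_choose_le K h hKh (h - i) i (by omega))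
      _ = (∑ i ∈ Finset.range (h + 1), 2 ^ i) * K.choose h := by
          rw [Finset.sum_mul]
      _ = (2 ^ (h + 1) - 1) * K.choose h := by
          rw [Nat.geomSum_eq (le_refl 2)]; simp
      _ ≤ 2 ^ (h + 1) * K.choose h := Nat.mul_le_mul_right _ (Nat.sub_le _ _)
      _ = 2 ^ h * (2 * K.choose h) := by ring
  exact Nat.le_of_mul_le_mul_left key (Nat.pow_pos (n := h) (by omega))
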